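/- On a gradient Ricci soliton with R_{ij} + ∇_i∇_j f = ρ g_{ij}, the Bach tensor satisfies (n-2) B_{ij} = -∇_k D_{ikj} - ((n-3)/(n-2)) C_{jli} ∇_l f. -/

import Mathlib

open Finset

/-- Kronecker delta: components of the metric in an orthonormal frame. -/
def kd {n : ℕ} (i j : Fin n) : ℝ := if i = j then 1 else 0

/-- On a gradient Ricci soliton `Ric + Hess f = ρ g` (n ≥ 4), the Bach
tensor satisfies `(n-2) B_{ij} = -∇_k D_{ikj} - ((n-3)/(n-2)) C_{jli} ∇_l f`.
Tensors are expressed in an orthonormal frame at a point: `dC m i j k = ∇_m C_{ijk}`,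
`dW m i j k l = ∇_m W_{ijkl}`, `dD m i j k = ∇_m D_{ijk}`, `Hess i j = ∇_i∇_j f`. -/
theorem bach_eq_divD_add_cotton_grad
    (n : ℕ) (hn : 4 ≤ n) (ρ : ℝ)
    (Ric Hess B : Fin n → Fin n → ℝ)
    (C D : Fin n → Fin n → Fin n → ℝ)
    (W : Fin n → Fin n → Fin n → Fin n → ℝ)
    (dC dD : Fin n → Fin n → Fin n → Fin n → ℝ)
    (dW : Fin n → Fin n → Fin n → Fin n → Fin n → ℝ)
    (df : Fin n → ℝ)
    -- the soliton equation
    (hsol : ∀ i j, Ric i j + Hess i j = ρ * kd i j)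
    -- definition of the Bach tensor: B_{ij} = (1/(n-2))(∇_k C_{kij} + R_{kl} W_{ikjl})
    (hB : ∀ i j, ((n : ℝ) - 2) * B i j = (∑ k, dC k k i j) + ∑ k, ∑ l, Ric k l * W i k j l)
    -- D_{ijk} = C_{ijk} + W_{ijkl}∇_l f
    (hD : ∀ i j k, D i j k = C i j k + ∑ l, W i j k l * df l)
    -- Leibniz rule for ∇D
    (hdD : ∀ m i j k, dD m i j k = dC m i j k
      + ∑ l, (dW m i j k l * df l + W i j k l * Hess m l))
    -- skew-symmetry of the Cotton tensor (and of its derivative) in the first two indices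
    (hdCskew : ∀ m i j k, dC m i j k = -dC m j i k)
    -- trace-freeness and pair symmetry of the Weyl tensor
    (hWtr : ∀ i j, ∑ k, W i k j k = 0)
    (hdWpair : ∀ m i j k l, dW m i j k l = dW m k l i j)
    -- divergence of the Weyl tensor: ∇_l W_{ijkl} = -((n-3)/(n-2)) C_{ijk}
    (hdivW : ∀ i j k, ∑ l, dW l i j k l = -(((n : ℝ) - 3)/((n : ℝ) - 2)) * C i j k) :
    ∀ i j, ((n : ℝ) - 2) * B i j =
      -(∑ k, dD k i k j) - (((n : ℝ) - 3)/((n : ℝ) - 2)) * ∑ l, C j l i * df l := by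
  intro i j
  have hA : (∑ k, dC k i k j) = -∑ k, dC k k i j := by
    rw [← Finset.sum_neg_distrib]
    exact Finset.sum_congr rfl fun k _ => hdCskew k i k j
  have hBt : ∑ k, ∑ l, dW k i k j l * df l
      = -((((n : ℝ) - 3)/((n : ℝ) - 2)) * ∑ l, C j l i * df l) := by
    rw [Finset.sum_comm, Finset.mul_sum, ← Finset.sum_neg_distrib]
    apply Finset.sum_congr rfl
    intro l _
    rw [← Finset.sum_mul]
    have h1 : (∑ k, dW k i k j l) = ∑ k, dW k j l i k :=
      Finset.sum_congr rfl fun k _ => hdWpair k i k j l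
    rw [h1, hdivW]
    ring
  have hCt : ∑ k, ∑ l, W i k j l * Hess k l = -∑ k, ∑ l, Ric k l * W i k j l := by
    have h2 : ∀ k l, W i k j l * Hess k l
        = W i k j l * (ρ * kd k l) - Ric k l * W i k j l := by
      intro k l
      have h := hsol k l
      have : Hess k l = ρ * kd k l - Ric k l := by linarith
      rw [this]; ring
    calc ∑ k, ∑ l, W i k j l * Hess k l
        = ∑ k, ((∑ l, W i k j l * (ρ * kd k l)) - ∑ l, Ric k l * W i k j l) := by
          apply Finset.sum_congr rfl
          intro k _
          rw [← Finset.sum_sub_distrib]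
          exact Finset.sum_congr rfl fun l _ => h2 k l
      _ = (∑ k, ∑ l, W i k j l * (ρ * kd k l)) - ∑ k, ∑ l, Ric k l * W i k j l :=
          Finset.sum_sub_distrib _ _
      _ = -∑ k, ∑ l, Ric k l * W i k j l := by
          have h3 : (∑ k, ∑ l, W i k j l * (ρ * kd k l)) = ρ * ∑ k, W i k j k := by
            rw [Finset.mul_sum]
            apply Finset.sum_congr rfl
            intro k _
            simp [kd, mul_ite, Finset.sum_ite_eq]
            ring
          rw [h3, hWtr]
          ring
  have hsum : ∑ k, dD k i k j
      = (∑ k, dC k i k j) + ((∑ k, ∑ l, dW k i k j l * df l)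
        + ∑ k, ∑ l, W i k j l * Hess k l) := by
    rw [← Finset.sum_add_distrib, ← Finset.sum_add_distrib]
    apply Finset.sum_congr rfl
    intro k _
    rw [hdD, Finset.sum_add_distrib]
  rw [hB i j, hsum, hA, hBt, hCt]
  ring
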